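/- arXiv:1701.00546 — 3 statements merged into one kernel-verified Lean document; each statement's English description precedes it below -/
import Mathlib

section
/- Let G be a finite undirected simple graph, let u and v be distinct non-adjacent vertices with k_G(u) > k_G(v), and let G' = G + (u,v) be the graph obtained by inserting the edge (u,v). If w is any vertex whose coreness changes after the insertion, i.e., k_{G'}(w) ≠ k_G(w), then w is k-reachable from v in the original graph G with k = k_G(v): there is a path from v to w in G all of whose vertices (including v and w) have G-coreness equal to k_G(v). -/
noncomputable def degOn {V : Type*} (G : SimpleGraph V) (C : Set V) (u : V) : ℕ :=
  {v ∈ C | G.Adj u v}.ncard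

noncomputable def coreness {V : Type*} (G : SimpleGraph V) (u : V) : ℕ :=
  sSup {k : ℕ | ∃ C : Set V, u ∈ C ∧ ∀ w ∈ C, k ≤ degOn G C w}

section aux
variable {V : Type*} [Fintype V]

lemma degOn_mono_set (G : SimpleGraph V) {C D : Set V} (h : C ⊆ D) (x : V) :
    degOn G C x ≤ degOn G D x :=
  Set.ncard_le_ncard (fun y hy => ⟨h hy.1, hy.2⟩) (Set.toFinite _)

lemma degOn_le_card (G : SimpleGraph V) (C : Set V) (x : V) :
    degOn G C x ≤ Fintype.card V := by
  calc degOn G C x ≤ (Set.univ : Set V).ncard :=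
        Set.ncard_le_ncard (Set.subset_univ _) (Set.toFinite _)
    _ = Fintype.card V := by rw [Set.ncard_univ, Nat.card_eq_fintype_card]

lemma coreness_bddAbove (G : SimpleGraph V) (x : V) :
    BddAbove {k : ℕ | ∃ C : Set V, x ∈ C ∧ ∀ w ∈ C, k ≤ degOn G C w} := by
  refine ⟨Fintype.card V, fun k hk => ?_⟩
  obtain ⟨C, hx, hC⟩ := hk
  exact (hC x hx).trans (degOn_le_card G C x)

lemma coreness_nonempty (G : SimpleGraph V) (x : V) :
    (0 : ℕ) ∈ {k : ℕ | ∃ C : Set V, x ∈ C ∧ ∀ w ∈ C, k ≤ degOn G C w} :=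
  ⟨{x}, Set.mem_singleton x, fun _ _ => Nat.zero_le _⟩

lemma le_coreness (G : SimpleGraph V) {x : V} {k : ℕ} {C : Set V}
    (hx : x ∈ C) (hC : ∀ w ∈ C, k ≤ degOn G C w) : k ≤ coreness G x :=
  le_csSup (coreness_bddAbove G x) ⟨C, hx, hC⟩

lemma coreness_witness (G : SimpleGraph V) {x : V} {k : ℕ} (h : k ≤ coreness G x) :
    ∃ C : Set V, x ∈ C ∧ ∀ w ∈ C, k ≤ degOn G C w := by
  have hmem := Nat.sSup_mem ⟨0, coreness_nonempty G x⟩ (coreness_bddAbove G x)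
  obtain ⟨C, hx, hC⟩ := hmem
  exact ⟨C, hx, fun w hw => h.trans (hC w hw)⟩

/-- The `m`-core (set of vertices of coreness `≥ m`) has min induced degree `≥ m`. -/
lemma core_min_deg (G : SimpleGraph V) (m : ℕ) :
    ∀ x ∈ {x | m ≤ coreness G x}, m ≤ degOn G {x | m ≤ coreness G x} x := by
  intro x hx
  obtain ⟨C, hxC, hC⟩ := coreness_witness G hx
  have hsub : C ⊆ {x | m ≤ coreness G x} := fun y hy => le_coreness G hy hC
  exact (hC x hxC).trans (degOn_mono_set G hsub x)

end aux

/-- If the edge `(u,v)` with `k_G(u) > k_G(v)` is inserted, then every vertex `w` whose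
coreness changes is `k`-reachable from `v` in the original graph `G` with `k = k_G(v)`:
there is a path from `v` to `w` in `G` all of whose vertices have coreness `k_G(v)`. -/
theorem candidate_of_insert_gt {V : Type*} [Fintype V] (G G' : SimpleGraph V)
    (u v : V) (huv : u ≠ v) (hna : ¬ G.Adj u v)
    (hG' : ∀ a b, G'.Adj a b ↔ G.Adj a b ∨ (a = u ∧ b = v) ∨ (a = v ∧ b = u))
    (hk : coreness G v < coreness G u)
    (w : V) (hw : coreness G' w ≠ coreness G w) :
    ∃ p : G.Walk v w, p.IsPath ∧ ∀ x ∈ p.support, coreness G x = coreness G v := by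
  classical
  set c := coreness G w with hc
  -- Step 0: coreness is monotone, so coreness G' w > c.
  have hmono : ∀ x, coreness G x ≤ coreness G' x := by
    intro x
    apply csSup_le_csSup (coreness_bddAbove G' x) ⟨0, coreness_nonempty G x⟩
    rintro k ⟨C, hxC, hC⟩
    refine ⟨C, hxC, fun y hy => (hC y hy).trans ?_⟩
    exact Set.ncard_le_ncard (fun z hz => ⟨hz.1, (hG' y z).2 (Or.inl hz.2)⟩) (Set.toFinite _)
  have hlt : c + 1 ≤ coreness G' w := by
    rcases lt_or_ge c (coreness G' w) with h | h
    · exact h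
    · exact absurd (le_antisymm h (hmono w)) hw
  -- Step 1: witness set C for c+1 in G'.
  obtain ⟨C, hwC, hC⟩ := coreness_witness G' hlt
  -- degrees in G' vs G on C
  have hdeg_eq : ∀ x, x ≠ u → x ≠ v → degOn G' C x = degOn G C x := by
    intro x hxu hxv
    unfold degOn
    congr 1
    ext y
    simp only [Set.mem_setOf_eq, hG' x y]
    constructor
    · rintro ⟨hyC, hG | ⟨h1, h2⟩ | ⟨h1, h2⟩⟩
      · exact ⟨hyC, hG⟩
      · exact absurd h1 hxu
      · exact absurd h1 hxv
    · rintro ⟨hyC, hG⟩; exact ⟨hyC, Or.inl hG⟩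
  have hdeg_le : ∀ x, degOn G' C x ≤ degOn G C x + 1 := by
    intro x
    by_cases hxu : x = u
    · subst hxu
      have hsub : {y ∈ C | G'.Adj x y} ⊆ insert v {y ∈ C | G.Adj x y} := by
        rintro y ⟨hyC, hadj⟩
        rcases (hG' x y).1 hadj with h | ⟨_, h2⟩ | ⟨h1, _⟩
        · exact Set.mem_insert_of_mem _ ⟨hyC, h⟩
        · exact h2 ▸ Set.mem_insert _ _
        · exact absurd h1 huv
      calc degOn G' C x ≤ (insert v {y ∈ C | G.Adj x y}).ncard :=
            Set.ncard_le_ncard hsub (Set.toFinite _)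
        _ ≤ degOn G C x + 1 := Set.ncard_insert_le _ _
    by_cases hxv : x = v
    · subst hxv
      have hsub : {y ∈ C | G'.Adj x y} ⊆ insert u {y ∈ C | G.Adj x y} := by
        rintro y ⟨hyC, hadj⟩
        rcases (hG' x y).1 hadj with h | ⟨h1, _⟩ | ⟨_, h2⟩
        · exact Set.mem_insert_of_mem _ ⟨hyC, h⟩
        · exact absurd h1.symm huv
        · exact h2 ▸ Set.mem_insert _ _
      calc degOn G' C x ≤ (insert u {y ∈ C | G.Adj x y}).ncard :=
            Set.ncard_le_ncard hsub (Set.toFinite _)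
        _ ≤ degOn G C x + 1 := Set.ncard_insert_le _ _
    · rw [hdeg_eq x hxu hxv]; omega
  -- every vertex of C has G-coreness ≥ c
  have hcC : ∀ x ∈ C, c ≤ coreness G x := by
    intro x hx
    refine le_coreness G hx (fun y hy => ?_)
    have := hC y hy
    have := hdeg_le y
    omega
  -- v ∈ C
  have hvC : v ∈ C := by
    by_contra hvC
    have : ∀ x ∈ C, c + 1 ≤ degOn G C x := by
      intro x hx
      have hxv : x ≠ v := fun h => hvC (h ▸ hx)
      by_cases hxu : x = u
      · subst hxu
        have heq : degOn G' C x = degOn G C x := by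
          unfold degOn
          congr 1
          ext y
          simp only [Set.mem_setOf_eq, hG' x y]
          constructor
          · rintro ⟨hyC, hG | ⟨_, h2⟩ | ⟨h1, _⟩⟩
            · exact ⟨hyC, hG⟩
            · exact absurd (h2 ▸ hyC) hvC
            · exact absurd h1 huv
          · rintro ⟨hyC, hG⟩; exact ⟨hyC, Or.inl hG⟩
        rw [← heq]; exact hC x hx
      · rw [← hdeg_eq x hxu hxv]; exact hC x hx
    have := le_coreness G hwC this
    omega
  -- u ∈ C
  have huC : u ∈ C := by
    by_contra huC
    have : ∀ x ∈ C, c + 1 ≤ degOn G C x := by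
      intro x hx
      have hxu : x ≠ u := fun h => huC (h ▸ hx)
      by_cases hxv : x = v
      · subst hxv
        have heq : degOn G' C x = degOn G C x := by
          unfold degOn
          congr 1
          ext y
          simp only [Set.mem_setOf_eq, hG' x y]
          constructor
          · rintro ⟨hyC, hG | ⟨h1, _⟩ | ⟨_, h2⟩⟩
            · exact ⟨hyC, hG⟩
            · exact absurd h1.symm huv
            · exact absurd (h2 ▸ hyC) huC
          · rintro ⟨hyC, hG⟩; exact ⟨hyC, Or.inl hG⟩
        rw [← heq]; exact hC x hx
      · rw [← hdeg_eq x hxu hxv]; exact hC x hx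
    have := le_coreness G hwC this
    omega
  have hcv : c ≤ coreness G v := hcC v hvC
  -- the (c+1)-core H
  set H : Set V := {x | c + 1 ≤ coreness G x} with hH
  have hHdeg := core_min_deg G (c + 1)
  -- coreness G v = c
  have hvc : coreness G v = c := by
    by_contra hne
    have hvc' : c + 1 ≤ coreness G v := by omega
    have huc' : c + 1 ≤ coreness G u := by omega
    -- D = C ∪ H witnesses c+1 for w in G
    have hDdeg : ∀ x ∈ C ∪ H, c + 1 ≤ degOn G (C ∪ H) x := by
      intro x hx
      by_cases hxH : x ∈ H
      · exact (hHdeg x hxH).trans (degOn_mono_set G Set.subset_union_right x)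
      · rcases hx with hxC | hxH'
        · have hxu : x ≠ u := fun h => hxH (h ▸ huc')
          have hxv : x ≠ v := fun h => hxH (h ▸ hvc')
          calc c + 1 ≤ degOn G' C x := hC x hxC
            _ = degOn G C x := hdeg_eq x hxu hxv
            _ ≤ degOn G (C ∪ H) x := degOn_mono_set G Set.subset_union_left x
        · exact absurd hxH' hxH
    have := le_coreness G (Set.mem_union_left _ hwC) hDdeg
    omega
  have huu : c < coreness G u := by omega
  -- auxiliary graph on coreness-c vertices of C
  let Gc : SimpleGraph V :=
    { Adj := fun x y => G.Adj x y ∧ (coreness G x = c ∧ x ∈ C) ∧ (coreness G y = c ∧ y ∈ C)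
      symm := ⟨by rintro x y ⟨h, a, b⟩; exact ⟨h.symm, b, a⟩⟩
      loopless := ⟨fun x h => G.loopless.irrefl x h.1⟩ }
  -- vertices reachable in Gc from w satisfy the property
  have key : ∀ (a b : V) (p : Gc.Walk a b), a = b ∨ (coreness G b = c ∧ b ∈ C) := by
    intro a b p
    induction p with
    | nil => exact Or.inl rfl
    | cons h p ih =>
      rcases ih with rfl | hb
      · exact Or.inr h.2.2
      · exact Or.inr hb
  have hreach_prop : ∀ x, Gc.Reachable w x → coreness G x = c ∧ x ∈ C := by
    intro x hr
    obtain ⟨p⟩ := hr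
    rcases key w x p with rfl | hb
    · exact ⟨hc.symm, hwC⟩
    · exact hb
  -- w reaches v in Gc
  have hreach : Gc.Reachable w v := by
    by_contra hnr
    set B : Set V := {x | Gc.Reachable w x} with hB
    have hDdeg : ∀ x ∈ B ∪ H, c + 1 ≤ degOn G (B ∪ H) x := by
      intro x hx
      by_cases hxH : x ∈ H
      · exact (hHdeg x hxH).trans (degOn_mono_set G Set.subset_union_right x)
      rcases hx with hxB | hxH'
      · obtain ⟨hxc, hxC⟩ := hreach_prop x hxB
        have hxu : x ≠ u := fun h => by rw [h] at hxc; omega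
        have hxv : x ≠ v := fun h => hnr (h ▸ hxB)
        have hsub : {y ∈ C | G.Adj x y} ⊆ {y ∈ B ∪ H | G.Adj x y} := by
          rintro y ⟨hyC, hadj⟩
          refine ⟨?_, hadj⟩
          have hyc := hcC y hyC
          rcases eq_or_lt_of_le hyc with heq | hlt'
          · left
            exact hxB.trans (SimpleGraph.Adj.reachable ⟨hadj, ⟨hxc, hxC⟩, ⟨heq.symm, hyC⟩⟩)
          · right; exact hlt'
        calc c + 1 ≤ degOn G' C x := hC x hxC
          _ = degOn G C x := hdeg_eq x hxu hxv
          _ ≤ degOn G (B ∪ H) x := Set.ncard_le_ncard hsub (Set.toFinite _)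
      · exact absurd hxH' hxH
    have hwB : w ∈ B ∪ H := Or.inl (SimpleGraph.Reachable.refl w)
    have := le_coreness G hwB hDdeg
    omega
  -- extract the path
  obtain ⟨p0⟩ := hreach.symm
  have hedges : ∀ e ∈ p0.edges, e ∈ G.edgeSet := by
    intro e he
    have := p0.edges_subset_edgeSet he
    induction e with
    | h a b => exact this.1
  let q : G.Walk v w := p0.transfer G hedges
  have supp_key : ∀ (a b : V) (p : Gc.Walk a b), coreness G a = c →
      ∀ x ∈ p.support, coreness G x = c := by
    intro a b p
    induction p with
    | nil =>
      intro ha x hx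
      rw [SimpleGraph.Walk.support_nil, List.mem_singleton] at hx
      exact hx ▸ ha
    | cons h p ih =>
      intro ha x hx
      rw [SimpleGraph.Walk.support_cons, List.mem_cons] at hx
      rcases hx with rfl | hx
      · exact ha
      · exact ih h.2.2.1 x hx
  have hsupp : ∀ x ∈ q.support, coreness G x = c := by
    have hq : q.support = p0.support := p0.support_transfer hedges
    intro x hx
    rw [hq] at hx
    exact supp_key v w p0 hvc x hx
  refine ⟨q.bypass, q.bypass_isPath, fun x hx => ?_⟩
  rw [hvc]
  exact hsupp x (q.support_bypass_subset hx)
end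

section
/- Let G be a finite undirected simple graph, let u and v be distinct non-adjacent vertices, and let G' = G + (u,v) be the graph obtained by inserting the edge (u,v). A maximal clique C of G fails to be a maximal clique of G' if and only if C contains u or v, and C ⊆ (N_G(u) ∩ N_G(v)) ∪ {u, v}, where N_G(x) denotes the set of neighbors of x in G. -/
/-- `C` is a maximal clique of `G`: `C` is a clique and no strict superset of `C`
is a clique of `G`. -/
def IsMaxClique {V : Type*} (G : SimpleGraph V) (C : Set V) : Prop :=
  G.IsClique C ∧ ∀ D : Set V, C ⊂ D → ¬ G.IsClique D

/-- After inserting the edge `(u,v)` between distinct non-adjacent vertices, a maximal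
clique `C` of `G` fails to be a maximal clique of the new graph `G'` if and only if `C`
contains `u` or `v` and `C ⊆ (N_G(u) ∩ N_G(v)) ∪ {u, v}`. -/
theorem maxClique_not_maximal_after_insert_iff {V : Type*} [Fintype V]
    (G G' : SimpleGraph V) (u v : V) (huv : u ≠ v) (hna : ¬ G.Adj u v)
    (hG' : ∀ a b, G'.Adj a b ↔ G.Adj a b ∨ (a = u ∧ b = v) ∨ (a = v ∧ b = u))
    (C : Set V) (hC : IsMaxClique G C) :
    ¬ IsMaxClique G' C ↔
      (u ∈ C ∨ v ∈ C) ∧ C ⊆ (G.neighborSet u ∩ G.neighborSet v) ∪ {u, v} := by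
  obtain ⟨hCc, hCm⟩ := hC
  have adj' : ∀ a b, G.Adj a b → G'.Adj a b := fun a b h => (hG' a b).2 (Or.inl h)
  have hC' : G'.IsClique C := fun a ha b hb hab => adj' a b (hCc ha hb hab)
  constructor
  · intro hnot
    have hex : ∃ D : Set V, C ⊂ D ∧ G'.IsClique D := by
      by_contra h
      push_neg at h
      exact hnot ⟨hC', fun D hD hDc => h D hD hDc⟩
    obtain ⟨D, hCD, hDc⟩ := hex
    have huvD : u ∈ D ∧ v ∈ D := by
      by_contra h
      have hGD : G.IsClique D := by
        intro a ha b hb hab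
        rcases (hG' a b).1 (hDc ha hb hab) with h1 | ⟨rfl, rfl⟩ | ⟨rfl, rfl⟩
        · exact h1
        · exact absurd ⟨ha, hb⟩ h
        · exact absurd ⟨hb, ha⟩ h
      exact hCm D hCD hGD
    obtain ⟨huD, hvD⟩ := huvD
    have key : ∀ x ∈ D, x ≠ u → x ≠ v → G.Adj x u ∧ G.Adj x v := by
      intro x hx hxu hxv
      constructor
      · rcases (hG' x u).1 (hDc hx huD hxu) with h1 | ⟨rfl, _⟩ | ⟨h2, _⟩
        · exact h1
        · exact absurd rfl hxu
        · exact absurd h2 hxv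
      · rcases (hG' x v).1 (hDc hx hvD hxv) with h1 | ⟨h2, _⟩ | ⟨rfl, _⟩
        · exact h1
        · exact absurd h2 hxu
        · exact absurd rfl hxv
    constructor
    · by_contra h
      push_neg at h
      obtain ⟨huC, hvC⟩ := h
      have hsub : C ⊂ D \ {u} := by
        constructor
        · intro x hx
          exact ⟨hCD.1 hx, fun he => huC (by simpa using he ▸ hx)⟩
        · intro hsub'
          exact hvC (hsub' ⟨hvD, by simpa using huv.symm⟩)
      refine hCm _ hsub ?_
      intro a ha b hb hab
      rcases (hG' a b).1 (hDc ha.1 hb.1 hab) with h1 | ⟨hau, _⟩ | ⟨_, hbu⟩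
      · exact h1
      · exact absurd hau (by simpa using ha.2)
      · exact absurd hbu (by simpa using hb.2)
    · intro x hx
      by_cases hxu : x = u
      · exact Or.inr (Or.inl hxu)
      by_cases hxv : x = v
      · exact Or.inr (Or.inr hxv)
      · obtain ⟨h1, h2⟩ := key x (hCD.1 hx) hxu hxv
        exact Or.inl ⟨h1.symm, h2.symm⟩
  · rintro ⟨hmem, hsub⟩ ⟨_, hmax⟩
    have hvuC : ¬(u ∈ C ∧ v ∈ C) := fun ⟨h1, h2⟩ => hna (hCc h1 h2 huv)
    have key : ∀ x ∈ C, x ≠ u → x ≠ v → G.Adj x u ∧ G.Adj x v := by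
      intro x hx hxu hxv
      rcases hsub hx with ⟨h1, h2⟩ | h
      · exact ⟨h1.symm, h2.symm⟩
      · rcases h with h | h
        · exact absurd h hxu
        · exact absurd h hxv
    have huv' : G'.Adj u v := (hG' u v).2 (Or.inr (Or.inl ⟨rfl, rfl⟩))
    have h1 : ∀ a ∈ C, a ≠ u → G'.Adj a u := by
      intro a ha hau
      by_cases hav : a = v
      · subst hav; exact huv'.symm
      · exact adj' _ _ (key a ha hau hav).1
    have h2 : ∀ a ∈ C, a ≠ v → G'.Adj a v := by
      intro a ha hav
      by_cases hau : a = u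
      · subst hau; exact huv'
      · exact adj' _ _ (key a ha hau hav).2
    refine hmax (C ∪ {u, v}) ⟨Set.subset_union_left, fun h => ?_⟩ ?_
    · rcases hmem with hm | hm
      · exact hvuC ⟨hm, h (Or.inr (Or.inr rfl))⟩
      · exact hvuC ⟨h (Or.inr (Or.inl rfl)), hm⟩
    · intro a ha b hb hab
      rcases ha with haC | hau | hav
      · rcases hb with hbC | hbu | hbv
        · exact adj' _ _ (hCc haC hbC hab)
        · exact (hbu ▸ h1 a haC (hbu ▸ hab) : G'.Adj a b)
        · exact (hbv ▸ h2 a haC (hbv ▸ hab) : G'.Adj a b)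
      · rcases hb with hbC | hbu | hbv
        · exact hau ▸ (h1 b hbC (by rw [hau] at hab; exact fun e => hab e.symm)).symm
        · exact absurd (hau.trans hbu.symm) hab
        · exact hau ▸ hbv ▸ huv'
      · rcases hb with hbC | hbu | hbv
        · exact hav ▸ (h2 b hbC (by rw [hav] at hab; exact fun e => hab e.symm)).symm
        · exact hav ▸ hbu ▸ huv'.symm
        · exact absurd (hav.trans hbv.symm) hab
end

section
/- Let G be a finite undirected simple graph, let (u,v) be an edge of G, and let G' = G − (u,v) be the graph obtained by deleting the edge (u,v). Every maximal clique C of G' that is not a maximal clique of G contains exactly one of the two vertices u and v. -/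
/-- After deleting the edge `(u,v)`, every maximal clique `C` of the new graph `G'`
that is not a maximal clique of `G` contains exactly one of the two vertices `u`, `v`. -/
theorem new_maxClique_after_delete {V : Type*} [Fintype V]
    (G G' : SimpleGraph V) (u v : V) (hAdj : G.Adj u v)
    (hG' : ∀ a b, G'.Adj a b ↔ G.Adj a b ∧ ¬((a = u ∧ b = v) ∨ (a = v ∧ b = u)))
    (C : Set V) (hC : IsMaxClique G' C) (hnot : ¬ IsMaxClique G C) :
    (u ∈ C ∧ v ∉ C) ∨ (v ∈ C ∧ u ∉ C) := by
  have huv : u ≠ v := hAdj.ne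
  have hsub : ∀ a b, G'.Adj a b → G.Adj a b := fun a b h => ((hG' a b).1 h).1
  have key : ∀ (S : Set V), G.IsClique S → (u ∉ S ∨ v ∉ S) → G'.IsClique S := by
    intro S hS h a ha b hb hab
    rw [hG']
    refine ⟨hS ha hb hab, ?_⟩
    rintro (⟨rfl, rfl⟩ | ⟨rfl, rfl⟩) <;> rcases h with h | h <;>
      first | exact h ha | exact h hb
  by_cases hu : u ∈ C <;> by_cases hv : v ∈ C
  · exfalso
    exact ((hG' u v).1 (hC.1 hu hv huv)).2 (Or.inl ⟨rfl, rfl⟩)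
  · exact Or.inl ⟨hu, hv⟩
  · exact Or.inr ⟨hv, hu⟩
  · exfalso
    have hCG : G.IsClique C := fun a ha b hb hab => hsub _ _ (hC.1 ha hb hab)
    rw [IsMaxClique, not_and] at hnot
    push_neg at hnot
    obtain ⟨D, hCD, hD⟩ := hnot hCG
    obtain ⟨x, hxD, hxC⟩ := Set.exists_of_ssubset hCD
    have hS : G.IsClique (insert x C) := hD.subset (Set.insert_subset hxD hCD.1)
    have hone : u ∉ insert x C ∨ v ∉ insert x C := by
      by_cases hxv : x = v
      · subst hxv
        exact Or.inl (by simp [huv, hu])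
      · exact Or.inr (by simp [Ne.symm hxv, hv])
    exact hC.2 (insert x C) (Set.ssubset_insert hxC) (key _ hS hone)
end
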